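/- arXiv:2402.00383 — 3 statements merged into one kernel-verified Lean document; each statement's English description precedes it below -/
import Mathlib

section
/- Let G be a group and A an F-subspace of F[G] spanned by {underline(D) : D in 𝒟} where 𝒟 is a finite-support partition of G. Then A is a Schur ring over G with basic sets 𝒟 if and only if A is a subring of F[G], A is closed under the Hadamard product ∘ and the inverse map *, {1} lies in 𝒟, and every g in G lies in some D in 𝒟. -/
noncomputable def simpleQuantity (F : Type*) [Field F] {G : Type*} [Group G]
    (D : Finset G) : MonoidAlgebra F G :=
  ∑ g ∈ D, MonoidAlgebra.single g 1

structure SchurRing (F G : Type*) [Field F] [Group G] where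
  parts : Set (Finset G)
  parts_nonempty : ∀ D ∈ parts, D.Nonempty
  cover : ∀ g : G, ∃ D ∈ parts, g ∈ D
  eq_of_mem : ∀ D₁ ∈ parts, ∀ D₂ ∈ parts, ∀ g : G, g ∈ D₁ → g ∈ D₂ → D₁ = D₂
  one_mem : ({1} : Finset G) ∈ parts
  inv_mem : ∀ D ∈ parts, ∃ D' ∈ parts, ∀ g : G, g ∈ D' ↔ g⁻¹ ∈ D
  mul_mem : ∀ x ∈ Submodule.span F (simpleQuantity F '' parts),
    ∀ y ∈ Submodule.span F (simpleQuantity F '' parts),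
    x * y ∈ Submodule.span F (simpleQuantity F '' parts)

noncomputable def SchurRing.span {F G : Type*} [Field F] [Group G] (A : SchurRing F G) :
    Submodule F (MonoidAlgebra F G) :=
  Submodule.span F (simpleQuantity F '' A.parts)

def SchurRing.IsASet {F G : Type*} [Field F] [Group G] (A : SchurRing F G)
    (S : Set G) : Prop :=
  ∀ D ∈ A.parts, (∃ g ∈ D, g ∈ S) → ↑D ⊆ S

/-- The Hadamard (coefficientwise) product on the group algebra. -/
noncomputable def hadamard {F G : Type*} [Field F] [Group G]
    (α β : MonoidAlgebra F G) : MonoidAlgebra F G :=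
  MonoidAlgebra.ofCoeff (Finsupp.zipWith (· * ·) (mul_zero 0) α.coeff β.coeff)

/-- The star map `α ↦ α*` sending `Σ α_g g` to `Σ α_g g⁻¹`. -/
noncomputable def starElt {F G : Type*} [Field F] [Group G]
    (α : MonoidAlgebra F G) : MonoidAlgebra F G :=
  MonoidAlgebra.ofCoeff (Finsupp.mapDomain (·⁻¹) α.coeff)

section SRAux
set_option linter.unusedSectionVars false

variable {F G : Type*} [Field F] [Group G] [DecidableEq G]

lemma sq_apply' (D : Finset G) (h : G) :
    (simpleQuantity F D).coeff h = if h ∈ D then 1 else 0 := by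
  rw [simpleQuantity, MonoidAlgebra.coeff_sum, Finsupp.finset_sum_apply]
  simp only [MonoidAlgebra.coeff_single_apply]
  exact Finset.sum_ite_eq' D h (fun _ => (1:F))

lemma hadamard_apply' (α β : MonoidAlgebra F G) (g : G) :
    (hadamard α β).coeff g = α.coeff g * β.coeff g := rfl

lemma sq_empty : simpleQuantity F (∅ : Finset G) = 0 := by simp [simpleQuantity]

lemma hadamard_sq' (D D' : Finset G) :
    hadamard (simpleQuantity F D) (simpleQuantity F D')
      = simpleQuantity F (D ∩ D') := by
  ext g
  simp only [hadamard_apply', sq_apply', Finset.mem_inter]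
  by_cases h1 : g ∈ D <;> by_cases h2 : g ∈ D' <;> simp [h1, h2]

lemma starElt_sq' (D : Finset G) :
    starElt (simpleQuantity F D) = simpleQuantity F (D.image (·⁻¹)) := by
  ext h
  have hiff : h ∈ D.image (·⁻¹) ↔ h⁻¹ ∈ D := by
    simp only [Finset.mem_image]
    constructor
    · rintro ⟨a, ha, rfl⟩; simpa using ha
    · intro hh; exact ⟨h⁻¹, hh, inv_inv h⟩
  rw [starElt, MonoidAlgebra.coeff_ofCoeff]
  conv_lhs => rw [← inv_inv h]
  rw [Finsupp.mapDomain_apply inv_injective, sq_apply', sq_apply']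
  simp only [hiff]

lemma hadamard_add_left' (α α' β : MonoidAlgebra F G) :
    hadamard (α + α') β = hadamard α β + hadamard α' β := by
  ext g; show (α.coeff g + α'.coeff g) * β.coeff g = α.coeff g * β.coeff g + α'.coeff g * β.coeff g; ring

lemma hadamard_add_right' (α β β' : MonoidAlgebra F G) :
    hadamard α (β + β') = hadamard α β + hadamard α β' := by
  ext g; show α.coeff g * (β.coeff g + β'.coeff g) = α.coeff g * β.coeff g + α.coeff g * β'.coeff g; ring

lemma hadamard_smul_left' (c : F) (α β : MonoidAlgebra F G) :
    hadamard (c • α) β = c • hadamard α β := by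
  ext g; show (c * α.coeff g) * β.coeff g = c * (α.coeff g * β.coeff g); ring

lemma hadamard_smul_right' (c : F) (α β : MonoidAlgebra F G) :
    hadamard α (c • β) = c • hadamard α β := by
  ext g; show α.coeff g * (c * β.coeff g) = c * (α.coeff g * β.coeff g); ring

lemma hadamard_zero_left' (β : MonoidAlgebra F G) : hadamard 0 β = 0 := by
  ext g; show 0 * β.coeff g = 0; ring

lemma hadamard_zero_right' (α : MonoidAlgebra F G) : hadamard α 0 = 0 := by
  ext g; show α.coeff g * 0 = 0; ring

variable (𝒟 : Set (Finset G))
    (hdisj : ∀ D₁ ∈ 𝒟, ∀ D₂ ∈ 𝒟, ∀ g : G, g ∈ D₁ → g ∈ D₂ → D₁ = D₂)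

include hdisj

/-- Elements of the span are constant on each part. -/
lemma coeff_const : ∀ x ∈ Submodule.span F (simpleQuantity F '' 𝒟),
    ∀ D ∈ 𝒟, ∀ g ∈ D, ∀ h ∈ D, x.coeff g = x.coeff h := by
  intro x hx
  induction hx using Submodule.span_induction with
  | mem x hxs =>
    obtain ⟨E, hE, rfl⟩ := hxs
    intro D hD g hg h hh
    rw [sq_apply', sq_apply']
    by_cases hgE : g ∈ E
    · have : D = E := hdisj D hD E hE g hg hgE
      simp [hgE, this ▸ hh]
    · have hhE : h ∉ E := fun hhE => hgE ((hdisj D hD E hE h hh hhE) ▸ hg)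
      simp [hgE, hhE]
  | zero => intro D hD g hg h hh; rfl
  | add x y hx hy ihx ihy =>
    intro D hD g hg h hh
    show x.coeff g + y.coeff g = x.coeff h + y.coeff h
    rw [ihx D hD g hg h hh, ihy D hD g hg h hh]
  | smul c x hx ihx =>
    intro D hD g hg h hh
    show c * x.coeff g = c * x.coeff h
    rw [ihx D hD g hg h hh]

/-- If the simple quantity of `S` lies in the span and a part meets `S`,
then that part is contained in `S`. -/
lemma part_subset {S : Finset G}
    (hS : simpleQuantity F S ∈ Submodule.span F (simpleQuantity F '' 𝒟))
    {D : Finset G} (hD : D ∈ 𝒟) {g : G} (hg : g ∈ D) (hgS : g ∈ S) :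
    D ⊆ S := by
  intro h hh
  have := coeff_const 𝒟 hdisj _ hS D hD g hg h hh
  rw [sq_apply', sq_apply', if_pos hgS] at this
  by_contra hhS
  rw [if_neg hhS] at this
  exact one_ne_zero this

lemma hadamard_mem : ∀ x ∈ Submodule.span F (simpleQuantity F '' 𝒟),
    ∀ y ∈ Submodule.span F (simpleQuantity F '' 𝒟),
    hadamard x y ∈ Submodule.span F (simpleQuantity F '' 𝒟) := by
  intro x hx
  induction hx using Submodule.span_induction with
  | mem x hxs =>
    obtain ⟨D, hD, rfl⟩ := hxs
    intro y hy
    induction hy using Submodule.span_induction with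
    | mem y hys =>
      obtain ⟨D', hD', rfl⟩ := hys
      rw [hadamard_sq']
      by_cases hmeet : ∃ g, g ∈ D ∧ g ∈ D'
      · obtain ⟨g, hg, hg'⟩ := hmeet
        have : D = D' := hdisj D hD D' hD' g hg hg'
        subst this
        rw [Finset.inter_self]
        exact Submodule.subset_span ⟨D, hD, rfl⟩
      · have : D ∩ D' = ∅ := by
          ext g; simp only [Finset.mem_inter, Finset.notMem_empty, iff_false]
          exact fun ⟨h1, h2⟩ => hmeet ⟨g, h1, h2⟩
        rw [this, sq_empty]
        exact Submodule.zero_mem _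
    | zero => rw [hadamard_zero_right']; exact Submodule.zero_mem _
    | add y z hy hz ihy ihz =>
      rw [hadamard_add_right']; exact Submodule.add_mem _ ihy ihz
    | smul c y hy ihy =>
      rw [hadamard_smul_right']; exact Submodule.smul_mem _ c ihy
  | zero => intro y hy; rw [hadamard_zero_left']; exact Submodule.zero_mem _
  | add x z hx hz ihx ihz =>
    intro y hy
    rw [hadamard_add_left']
    exact Submodule.add_mem _ (ihx y hy) (ihz y hy)
  | smul c x hx ihx =>
    intro y hy
    rw [hadamard_smul_left']
    exact Submodule.smul_mem _ c (ihx y hy)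

end SRAux

section SRAux2
set_option linter.unusedSectionVars false

variable {F G : Type*} [Field F] [Group G] [DecidableEq G]

lemma starElt_add' (α β : MonoidAlgebra F G) :
    starElt (α + β) = starElt α + starElt β := congrArg MonoidAlgebra.ofCoeff Finsupp.mapDomain_add

lemma starElt_smul' (c : F) (α : MonoidAlgebra F G) :
    starElt (c • α) = c • starElt α := congrArg MonoidAlgebra.ofCoeff (Finsupp.mapDomain_smul c α.coeff)

lemma starElt_zero' : starElt (0 : MonoidAlgebra F G) = 0 := congrArg MonoidAlgebra.ofCoeff Finsupp.mapDomain_zero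

lemma sq_one : simpleQuantity F ({1} : Finset G) = 1 := by
  simp [simpleQuantity, MonoidAlgebra.one_def]

variable (𝒟 : Set (Finset G))
    (hinv : ∀ D ∈ 𝒟, ∃ D' ∈ 𝒟, ∀ g : G, g ∈ D' ↔ g⁻¹ ∈ D)

include hinv

lemma starElt_mem : ∀ x ∈ Submodule.span F (simpleQuantity F '' 𝒟),
    starElt x ∈ Submodule.span F (simpleQuantity F '' 𝒟) := by
  intro x hx
  induction hx using Submodule.span_induction with
  | mem x hxs =>
    obtain ⟨D, hD, rfl⟩ := hxs
    rw [starElt_sq']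
    obtain ⟨D', hD', hiff⟩ := hinv D hD
    have : D.image (·⁻¹) = D' := Finset.ext fun h => by
      simp only [Finset.mem_image]
      constructor
      · rintro ⟨a, ha, rfl⟩; exact (hiff a⁻¹).2 (by simpa using ha)
      · intro hh; exact ⟨h⁻¹, (hiff h).1 hh, inv_inv h⟩
    rw [this]
    exact Submodule.subset_span ⟨D', hD', rfl⟩
  | zero => rw [starElt_zero']; exact Submodule.zero_mem _
  | add x y hx hy ihx ihy => rw [starElt_add']; exact Submodule.add_mem _ ihx ihy
  | smul c x hx ihx => rw [starElt_smul']; exact Submodule.smul_mem _ c ihx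

end SRAux2

/-- Wielandt's criterion: the span of the simple quantities of a finite-support
partition `𝒟` is a Schur ring with basic sets `𝒟` iff it is a subring closed
under the Hadamard product and the star map, `{1} ∈ 𝒟`, and `𝒟` covers `G`. -/
theorem schurRing_iff {F G : Type*} [Field F] [CharZero F] [Group G]
    (𝒟 : Set (Finset G))
    (hne : ∀ D ∈ 𝒟, D.Nonempty)
    (hdisj : ∀ D₁ ∈ 𝒟, ∀ D₂ ∈ 𝒟, ∀ g : G, g ∈ D₁ → g ∈ D₂ → D₁ = D₂) :
    (∃ A : SchurRing F G, A.parts = 𝒟) ↔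
      ((1 : MonoidAlgebra F G) ∈ Submodule.span F (simpleQuantity F '' 𝒟) ∧
       (∀ x ∈ Submodule.span F (simpleQuantity F '' 𝒟),
          ∀ y ∈ Submodule.span F (simpleQuantity F '' 𝒟),
          x * y ∈ Submodule.span F (simpleQuantity F '' 𝒟)) ∧
       (∀ x ∈ Submodule.span F (simpleQuantity F '' 𝒟),
          ∀ y ∈ Submodule.span F (simpleQuantity F '' 𝒟),
          hadamard x y ∈ Submodule.span F (simpleQuantity F '' 𝒟)) ∧
       (∀ x ∈ Submodule.span F (simpleQuantity F '' 𝒟),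
          starElt x ∈ Submodule.span F (simpleQuantity F '' 𝒟)) ∧
       ({1} : Finset G) ∈ 𝒟 ∧
       (∀ g : G, ∃ D ∈ 𝒟, g ∈ D)) := by
  classical
  constructor
  · rintro ⟨A, rfl⟩
    refine ⟨?_, A.mul_mem, hadamard_mem A.parts hdisj, starElt_mem A.parts A.inv_mem,
      A.one_mem, A.cover⟩
    rw [← sq_one (F := F) (G := G)]
    exact Submodule.subset_span ⟨{1}, A.one_mem, rfl⟩
  · rintro ⟨-, hmul, -, hstar, hone, hcover⟩
    refine ⟨⟨𝒟, hne, hcover, hdisj, hone, ?_, hmul⟩, rfl⟩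
    intro D hD
    have hDs : simpleQuantity F D ∈ Submodule.span F (simpleQuantity F '' 𝒟) :=
      Submodule.subset_span ⟨D, hD, rfl⟩
    have hS : simpleQuantity F (D.image (·⁻¹)) ∈ Submodule.span F (simpleQuantity F '' 𝒟) := by
      have := hstar _ hDs; rwa [starElt_sq'] at this
    obtain ⟨g, hg⟩ := hne D hD
    have hgS : g⁻¹ ∈ D.image (·⁻¹) := Finset.mem_image_of_mem _ hg
    obtain ⟨E, hE, hgE⟩ := hcover g⁻¹
    have hES : E ⊆ D.image (·⁻¹) := part_subset 𝒟 hdisj hS hE hgE hgS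
    have hEs : simpleQuantity F (E.image (·⁻¹)) ∈ Submodule.span F (simpleQuantity F '' 𝒟) := by
      have := hstar _ (Submodule.subset_span ⟨E, hE, rfl⟩); rwa [starElt_sq'] at this
    have hgEinv : g ∈ E.image (·⁻¹) := by
      have h1 : (g⁻¹)⁻¹ ∈ E.image (·⁻¹) := Finset.mem_image_of_mem _ hgE
      simpa using h1
    have hDE : D ⊆ E.image (·⁻¹) := part_subset 𝒟 hdisj hEs hD hg hgEinv
    have hED : E.image (·⁻¹) ⊆ D := by
      intro h hh
      obtain ⟨e, he, rfl⟩ := Finset.mem_image.1 hh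
      obtain ⟨d, hd, hde⟩ := Finset.mem_image.1 (hES he)
      have : e⁻¹ = d := by rw [← hde]; simp
      exact this ▸ hd
    have hEDeq : E.image (·⁻¹) = D := subset_antisymm hED hDE
    refine ⟨E, hE, fun h => ?_⟩
    constructor
    · intro hh
      have : h⁻¹ ∈ E.image (·⁻¹) := Finset.mem_image_of_mem _ hh
      rwa [hEDeq] at this
    · intro hh
      rw [← hEDeq] at hh
      obtain ⟨e, he, hhe⟩ := Finset.mem_image.1 hh
      have : e = h := by have := congrArg (·⁻¹) hhe; simpa using this
      exact this ▸ he
end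

section
/- Let A be a Schur ring over a group G and α ∈ A. Then the subgroup H = ⟨supp(α)⟩ generated by the support of α is an A-subgroup (a subgroup of G that is a union of basic sets of A). -/
open Classical in
lemma simpleQuantity_apply (F : Type*) [Field F] {G : Type*} [Group G]
    (D : Finset G) (g : G) : (simpleQuantity F D).coeff g = if g ∈ D then 1 else 0 := by
  rw [simpleQuantity, MonoidAlgebra.coeff_sum, Finsupp.finset_sum_apply]
  simp [MonoidAlgebra.coeff_single, Finsupp.single_apply, Finset.sum_ite_eq]

/-- Coefficients of elements of the span are constant on parts. -/
lemma coeff_const_s4 {F G : Type*} [Field F] [Group G] (A : SchurRing F G)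
    {x : MonoidAlgebra F G} (hx : x ∈ A.span) {D : Finset G} (hD : D ∈ A.parts)
    {g h : G} (hg : g ∈ D) (hh : h ∈ D) : x.coeff g = x.coeff h := by
  induction hx using Submodule.span_induction with
  | mem y hy =>
    obtain ⟨E, hE, rfl⟩ := hy
    rw [simpleQuantity_apply, simpleQuantity_apply]
    by_cases hgE : g ∈ E
    · have : D = E := A.eq_of_mem D hD E hE g hg hgE
      simp [hgE, this ▸ hh]
    · have hhE : h ∉ E := fun hhE => hgE ((A.eq_of_mem D hD E hE h hh hhE) ▸ hg)
      simp [hgE, hhE]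
  | zero => rfl
  | add y z _ _ hy hz => rw [MonoidAlgebra.coeff_add, Finsupp.add_apply, Finsupp.add_apply, hy, hz]
  | smul c y _ hy => rw [MonoidAlgebra.coeff_smul, Finsupp.smul_apply, Finsupp.smul_apply, hy]

open Classical in
lemma mem_support_mul {F G : Type*} [Field F] [CharZero F] [Group G]
    (D E : Finset G) {g h : G} (hg : g ∈ D) (hh : h ∈ E) :
    (simpleQuantity F D * simpleQuantity F E).coeff (g * h) ≠ 0 := by
  have : (simpleQuantity F D * simpleQuantity F E : MonoidAlgebra F G).coeff (g * h)
      = ((D ×ˢ E).filter (fun p => p.1 * p.2 = g * h)).card := by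
    rw [simpleQuantity, simpleQuantity, Finset.sum_mul_sum]
    simp_rw [MonoidAlgebra.single_mul_single, mul_one]
    rw [← Finset.sum_product', MonoidAlgebra.coeff_sum, Finsupp.finset_sum_apply]
    rw [Finset.card_filter]
    push_cast
    refine Finset.sum_congr rfl fun p _ => ?_
    rw [MonoidAlgebra.coeff_single, Finsupp.single_apply]
  rw [this]
  have : (g, h) ∈ (D ×ˢ E).filter (fun p => p.1 * p.2 = g * h) := by
    simp [hg, hh]
  exact Nat.cast_ne_zero.mpr (Finset.card_ne_zero_of_mem this)

open Classical in
lemma support_simpleQuantity_subset {F G : Type*} [Field F] [Group G] (D : Finset G) :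
    (simpleQuantity F D).coeff.support ⊆ D := by
  intro g hg
  rw [Finsupp.mem_support_iff, simpleQuantity_apply] at hg
  by_contra h
  simp [h] at hg


open Pointwise in
/-- The subgroup generated by the support of an element of a Schur ring is an
`A`-subgroup. -/
theorem closure_support_isASet {F G : Type*} [Field F] [CharZero F] [Group G]
    (A : SchurRing F G) (α : MonoidAlgebra F G) (hα : α ∈ A.span) :
    A.IsASet ↑(Subgroup.closure (↑α.coeff.support : Set G)) := by
  classical
  letI : DecidableEq G := Classical.decEq G
  set H := Subgroup.closure (↑α.coeff.support : Set G) with hH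
  let P : G → Prop := fun x => ∃ D ∈ A.parts, (↑D : Set G) ⊆ ↑H ∧ x ∈ D
  let S : Subgroup G :=
  { carrier := {x | P x}
    one_mem' := ⟨{1}, A.one_mem, by simp [H.one_mem], by simp⟩
    inv_mem' := by
      rintro x ⟨D, hD, hDH, hxD⟩
      obtain ⟨D', hD', hiff⟩ := A.inv_mem D hD
      refine ⟨D', hD', fun y hy => ?_, ?_⟩
      · have : y⁻¹ ∈ D := (hiff y).mp hy
        have : y⁻¹ ∈ H := hDH this
        simpa using H.inv_mem this
      · exact (hiff x⁻¹).mpr (by simpa using hxD)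
    mul_mem' := by
      rintro x y ⟨D, hD, hDH, hxD⟩ ⟨E, hE, hEH, hyE⟩
      have hp : simpleQuantity F D * simpleQuantity F E ∈ A.span :=
        A.mul_mem _ (Submodule.subset_span ⟨D, hD, rfl⟩)
          _ (Submodule.subset_span ⟨E, hE, rfl⟩)
      have hsupp : (simpleQuantity F D * simpleQuantity F E : MonoidAlgebra F G).coeff.support
          ⊆ D * E := by
        refine (MonoidAlgebra.support_coeff_mul_subset _ _).trans ?_
        exact Finset.mul_subset_mul (support_simpleQuantity_subset D)
          (support_simpleQuantity_subset E)
      have hDEH : ((D * E : Finset G) : Set G) ⊆ ↑H := by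
        intro z hz
        rw [Finset.mem_coe, Finset.mem_mul] at hz
        obtain ⟨d, hd, e, he, rfl⟩ := hz
        exact H.mul_mem (hDH hd) (hEH he)
      obtain ⟨D'', hD'', hxyD''⟩ := A.cover (x * y)
      have hne : (simpleQuantity F D * simpleQuantity F E : MonoidAlgebra F G).coeff (x * y) ≠ 0 :=
        mem_support_mul D E hxD hyE
      refine ⟨D'', hD'', fun z hz => ?_, hxyD''⟩
      have : (simpleQuantity F D * simpleQuantity F E : MonoidAlgebra F G).coeff z ≠ 0 := by
        rw [coeff_const_s4 A hp hD'' hz hxyD'']; exact hne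
      exact hDEH (hsupp (Finsupp.mem_support_iff.mpr this))
  }
  have hHS : ∀ g ∈ H, P g := by
    have : H ≤ S := by
      rw [hH, Subgroup.closure_le]
      intro g hg
      obtain ⟨D, hD, hgD⟩ := A.cover g
      refine ⟨D, hD, fun z hz => ?_, hgD⟩
      · refine Subgroup.subset_closure ?_
        have : α.coeff z ≠ 0 := by
          rw [coeff_const_s4 A hα hD hz hgD]
          exact Finsupp.mem_support_iff.mp hg
        exact Finsupp.mem_support_iff.mpr this
    exact fun g hg => this hg
  rintro D hD ⟨g, hgD, hgH⟩
  obtain ⟨E, hE, hEH, hgE⟩ := hHS g hgH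
  have : D = E := A.eq_of_mem D hD E hE g hgD hgE
  exact this ▸ hEH
end

section
/- Let G be an abelian group whose torsion subgroup T(G) has finite exponent, and let A be a Schur ring over G. Then T(G) is an A-subgroup. -/
namespace SchurRingTorsionProof

set_option linter.unusedSectionVars false

open MonoidAlgebra Finset

variable {G : Type*} [CommGroup G] [DecidableEq G]

/-- Coefficient of a sum of singles with coefficient 1. -/
lemma sq_apply {k : Type*} [Semiring k] (S : Finset G) (a : G) :
    ((∑ g ∈ S, MonoidAlgebra.single g (1 : k)) : MonoidAlgebra k G).coeff a
      = if a ∈ S then 1 else 0 := by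
  rw [MonoidAlgebra.coeff_sum, Finset.sum_apply']
  simp [MonoidAlgebra.coeff_single, Finsupp.single_apply]

section CoeffMap

variable {k R : Type*} [CommSemiring k] [CommSemiring R]

/-- The ring homomorphism `MonoidAlgebra k G →+* MonoidAlgebra R G` induced by a
ring homomorphism on coefficients. -/
noncomputable def coeffMap (f : k →+* R) : MonoidAlgebra k G →+* MonoidAlgebra R G :=
  MonoidAlgebra.liftNCRingHom (MonoidAlgebra.singleOneRingHom.comp f) (MonoidAlgebra.of R G)
    fun _ _ => Commute.all _ _

lemma coeffMap_single (f : k →+* R) (a : G) (b : k) :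
    coeffMap f (MonoidAlgebra.single a b) = MonoidAlgebra.single a (f b) := by
  show (MonoidAlgebra.liftNC _ _) (MonoidAlgebra.single a b) = _
  rw [MonoidAlgebra.liftNC_single]
  show MonoidAlgebra.single (1 : G) (f b) * MonoidAlgebra.single a (1 : R) = _
  rw [MonoidAlgebra.single_mul_single, one_mul, mul_one]

lemma coeffMap_apply (f : k →+* R) (z : MonoidAlgebra k G) (x : G) :
    (coeffMap f z).coeff x = f (z.coeff x) := by
  induction z using MonoidAlgebra.induction_linear with
  | zero => simp
  | add u v hu hv =>
      rw [map_add]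
      rw [MonoidAlgebra.coeff_add, MonoidAlgebra.coeff_add, Finsupp.add_apply, Finsupp.add_apply, hu, hv, map_add]
  | single a b =>
      rw [coeffMap_single]
      rw [MonoidAlgebra.coeff_single, MonoidAlgebra.coeff_single, Finsupp.single_apply, Finsupp.single_apply, apply_ite f, map_zero]

end CoeffMap

variable {F : Type*} [Field F] [CharZero F]

lemma sq_eq (D : Finset G) : simpleQuantity F D = ∑ g ∈ D, MonoidAlgebra.single g 1 := rfl

lemma one_mem_span (A : SchurRing F G) : (1 : MonoidAlgebra F G) ∈ A.span := by
  have h1 : (1 : MonoidAlgebra F G) = simpleQuantity F ({1} : Finset G) := by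
    rw [sq_eq, Finset.sum_singleton, MonoidAlgebra.one_def]
  rw [h1]
  exact Submodule.subset_span ⟨_, A.one_mem, rfl⟩

lemma sq_mem_span (A : SchurRing F G) {D : Finset G} (hD : D ∈ A.parts) :
    simpleQuantity F D ∈ A.span :=
  Submodule.subset_span ⟨D, hD, rfl⟩

lemma pow_mem_span (A : SchurRing F G) {D : Finset G} (hD : D ∈ A.parts) (m : ℕ) :
    (simpleQuantity F D) ^ m ∈ A.span := by
  induction m with
  | zero => simpa using one_mem_span A
  | succ m ih =>
      rw [pow_succ]
      exact A.mul_mem _ ih _ (sq_mem_span A hD)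

/-- Coefficients of elements of the span are constant on parts. -/
lemma span_apply_const (A : SchurRing F G) {x : MonoidAlgebra F G} (hx : x ∈ A.span)
    {P : Finset G} (hP : P ∈ A.parts) {a b : G} (ha : a ∈ P) (hb : b ∈ P) :
    x.coeff a = x.coeff b := by
  induction hx using Submodule.span_induction with
  | mem y hy =>
      obtain ⟨Q, hQ, rfl⟩ := hy
      rw [sq_eq, sq_apply, sq_apply]
      by_cases h : a ∈ Q
      · have hPQ : P = Q := A.eq_of_mem P hP Q hQ a ha h
        have hbQ : b ∈ Q := hPQ ▸ hb
        simp [h, hbQ]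
      · have h' : b ∉ Q := by
          intro hbQ
          have hPQ : P = Q := A.eq_of_mem P hP Q hQ b hb hbQ
          exact h (hPQ ▸ ha)
        simp [h, h']
  | zero => simp
  | add u v hu hv ihu ihv =>
      rw [MonoidAlgebra.coeff_add, Finsupp.add_apply, Finsupp.add_apply, ihu, ihv]
  | smul r u hu ihu =>
      rw [MonoidAlgebra.coeff_smul, Finsupp.smul_apply, Finsupp.smul_apply, ihu]

/-- For a positive integer `m` coprime to the torsion exponent `n`,
the `m`-th power map is injective. -/
lemma pow_coprime_injective {n : ℕ} (hn : 0 < n)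
    (hT : ∀ g ∈ CommGroup.torsion G, g ^ n = 1) {m : ℕ} (hm : 0 < m)
    (hcop : Nat.Coprime m n) :
    Function.Injective (fun x : G => x ^ m) := by
  intro x y hxy
  simp only at hxy
  have hdiv : (x / y) ^ m = 1 := by
    rw [div_pow, hxy, div_self']
  have hfin : IsOfFinOrder (x / y) := isOfFinOrder_iff_pow_eq_one.mpr ⟨m, hm, hdiv⟩
  have hxn : (x / y) ^ n = 1 := hT _ hfin
  have h1 : orderOf (x / y) ∣ m := orderOf_dvd_of_pow_eq_one hdiv
  have h2 : orderOf (x / y) ∣ n := orderOf_dvd_of_pow_eq_one hxn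
  have : orderOf (x / y) = 1 := Nat.eq_one_of_dvd_coprimes hcop h1 h2
  exact div_eq_one.mp (orderOf_eq_one_iff.mp this)

/-- Key lemma: the image of a part under the `p`-th power map is a union of parts. -/
lemma image_pow_part {n : ℕ} (hn : 0 < n) (hT : ∀ g ∈ CommGroup.torsion G, g ^ n = 1)
    (A : SchurRing F G) {p : ℕ} (hp : p.Prime) (hpn : n < p)
    {D Q : Finset G} (hD : D ∈ A.parts) (hQ : Q ∈ A.parts) {a : G} (haQ : a ∈ Q)
    (haD : a ∈ D.image (· ^ p)) : ∀ b ∈ Q, b ∈ D.image (· ^ p) := by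
  intro b hbQ
  haveI : Fact p.Prime := ⟨hp⟩
  set SZ : MonoidAlgebra ℤ G := ∑ d ∈ D, MonoidAlgebra.single d (1 : ℤ) with hSZ
  set z : MonoidAlgebra ℤ G := SZ ^ p with hz
  -- transfer to F
  have hmapF : coeffMap (Int.castRingHom F) z = (simpleQuantity F D) ^ p := by
    rw [hz, map_pow, hSZ, map_sum, sq_eq]
    congr 1
    refine Finset.sum_congr rfl fun d _ => ?_
    rw [coeffMap_single]
    norm_num
  have hspan : (simpleQuantity F D) ^ p ∈ A.span := pow_mem_span A hD p
  have hconstF : ((simpleQuantity F D) ^ p).coeff a = ((simpleQuantity F D) ^ p).coeff b :=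
    span_apply_const A hspan hQ haQ hbQ
  have hZconst : z.coeff a = z.coeff b := by
    have h1 : ((z.coeff a : ℤ) : F) = ((z.coeff b : ℤ) : F) := by
      have ha' := coeffMap_apply (Int.castRingHom F) z a
      have hb' := coeffMap_apply (Int.castRingHom F) z b
      rw [hmapF] at ha' hb'
      simp only [Int.coe_castRingHom] at ha' hb'
      rw [← ha', ← hb', hconstF]
    exact_mod_cast h1
  -- transfer to ZMod p
  haveI : CharP (MonoidAlgebra (ZMod p) G) p := by
    apply charP_of_injective_ringHom
      (f := (MonoidAlgebra.singleOneRingHom : ZMod p →+* MonoidAlgebra (ZMod p) G))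
    intro u v huv
    exact MonoidAlgebra.single_right_injective (m := (1 : G)) huv
  have hfrob : coeffMap (Int.castRingHom (ZMod p)) z
      = ∑ d ∈ D, MonoidAlgebra.single (d ^ p) (1 : ZMod p) := by
    rw [hz, map_pow, hSZ, map_sum]
    have h1 : ∀ d ∈ D, coeffMap (Int.castRingHom (ZMod p)) (MonoidAlgebra.single d (1 : ℤ))
        = MonoidAlgebra.single d (1 : ZMod p) := by
      intro d _
      rw [coeffMap_single]
      norm_num
    rw [Finset.sum_congr rfl h1, sum_pow_char]
    refine Finset.sum_congr rfl fun d _ => ?_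
    rw [MonoidAlgebra.single_pow, one_pow]
  have hinj : Function.Injective (fun x : G => x ^ p) := by
    refine pow_coprime_injective hn hT hp.pos ?_
    refine (Nat.Prime.coprime_iff_not_dvd hp).mpr fun hdvd => ?_
    have := Nat.le_of_dvd hn hdvd; omega
  have himg : (∑ d ∈ D, MonoidAlgebra.single (d ^ p) (1 : ZMod p))
      = ∑ y ∈ D.image (· ^ p), MonoidAlgebra.single y (1 : ZMod p) := by
    rw [Finset.sum_image (fun x _ y _ h => hinj h)]
  have hcoeff : ∀ x : G, (coeffMap (Int.castRingHom (ZMod p)) z).coeff x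
      = if x ∈ D.image (· ^ p) then (1 : ZMod p) else 0 := by
    intro x
    rw [hfrob, himg, sq_apply]
  have hpa := hcoeff a
  have hpb := hcoeff b
  rw [coeffMap_apply] at hpa hpb
  rw [if_pos haD] at hpa
  by_contra hbD
  rw [if_neg hbD] at hpb
  have hcast : ((z.coeff a : ℤ) : ZMod p) = ((z.coeff b : ℤ) : ZMod p) := by rw [hZconst]
  simp only [Int.coe_castRingHom] at hpa hpb
  rw [hpa, hpb] at hcast
  haveI : Fact (1 < p) := ⟨hp.one_lt⟩
  exact one_ne_zero hcast

/-- Iterated version: image under `x ↦ x ^ p ^ k`. -/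
lemma image_pow_iter_part {n : ℕ} (hn : 0 < n) (hT : ∀ g ∈ CommGroup.torsion G, g ^ n = 1)
    (A : SchurRing F G) {p : ℕ} (hp : p.Prime) (hpn : n < p) (k : ℕ) :
    ∀ D ∈ A.parts, ∀ Q ∈ A.parts, ∀ a ∈ Q, a ∈ D.image (· ^ p ^ k) →
      ∀ b ∈ Q, b ∈ D.image (· ^ p ^ k) := by
  induction k with
  | zero =>
      intro D hD Q hQ a haQ haD b hbQ
      have hD' : D.image (· ^ p ^ 0) = D := by
        ext x
        simp [pow_zero, pow_one]
      rw [hD'] at haD ⊢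
      have hQD : Q = D := A.eq_of_mem Q hQ D hD a haQ haD
      exact hQD ▸ hbQ
  | succ k ih =>
      intro D hD Q hQ a haQ haD b hbQ
      obtain ⟨d, hd, hda⟩ := Finset.mem_image.mp haD
      set y : G := d ^ p ^ k with hy
      obtain ⟨R, hR, hyR⟩ := A.cover y
      have hRim : ∀ r ∈ R, r ∈ D.image (· ^ p ^ k) :=
        ih D hD R hR y hyR (Finset.mem_image.mpr ⟨d, hd, rfl⟩)
      have haR : a ∈ R.image (· ^ p) := by
        refine Finset.mem_image.mpr ⟨y, hyR, ?_⟩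
        rw [hy, ← pow_mul, ← pow_succ, hda]
      have hbR : b ∈ R.image (· ^ p) :=
        image_pow_part hn hT A hp hpn hR hQ haQ haR b hbQ
      obtain ⟨r, hr, hrb⟩ := Finset.mem_image.mp hbR
      obtain ⟨d', hd', hd'r⟩ := Finset.mem_image.mp (hRim r hr)
      refine Finset.mem_image.mpr ⟨d', hd', ?_⟩
      rw [← hrb, ← hd'r, ← pow_mul, ← pow_succ]

end SchurRingTorsionProof

/-- If the torsion subgroup of an abelian group `G` has finite exponent, then it
is an `A`-subgroup for every Schur ring `A` over `G`. -/
theorem torsion_isASet {F G : Type*} [Field F] [CharZero F] [CommGroup G]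
    (hexp : ∃ n : ℕ, 0 < n ∧ ∀ g ∈ CommGroup.torsion G, g ^ n = 1)
    (A : SchurRing F G) :
    A.IsASet ↑(CommGroup.torsion G) := by
  classical
  obtain ⟨n, hn, hT⟩ := hexp
  intro D hD hg b hbD
  obtain ⟨g, hgD, hgT⟩ := hg
  have hgfin : IsOfFinOrder g := hgT
  set e : ℕ := orderOf g with he
  have he_pos : 0 < e := hgfin.orderOf_pos
  have he_dvd : e ∣ n := orderOf_dvd_of_pow_eq_one (hT g hgT)
  obtain ⟨p, hpge, hp⟩ := Nat.exists_infinite_primes (n + 1)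
  have hpn : n < p := hpge
  have hpe : Nat.Coprime p e := by
    rcases Nat.coprime_or_dvd_of_prime hp e with h | h
    · exact h
    · exfalso
      have h1 : p ≤ e := Nat.le_of_dvd he_pos h
      have h2 : e ≤ n := Nat.le_of_dvd hn he_dvd
      omega
  set k : ℕ := Nat.totient e with hk
  have hk_pos : 0 < k := Nat.totient_pos.mpr he_pos
  set m : ℕ := p ^ k with hm
  have hm1 : m ≡ 1 [MOD e] := Nat.ModEq.pow_totient hpe
  have hm2 : 2 ≤ m := by
    calc 2 ≤ p := hp.two_le
    _ = p ^ 1 := (pow_one p).symm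
    _ ≤ p ^ k := Nat.pow_le_pow_right hp.pos hk_pos
  have hgm : g ^ m = g := by
    have h1 : g ^ m = g ^ 1 := pow_eq_pow_iff_modEq.mpr (he ▸ hm1)
    rwa [pow_one] at h1
  have hDim : ∀ x ∈ D, x ∈ D.image (· ^ m) := by
    intro x hx
    exact SchurRingTorsionProof.image_pow_iter_part hn hT A hp hpn k D hD D hD g hgD
      (Finset.mem_image.mpr ⟨g, hgD, hgm⟩) x hx
  have hcopmn : Nat.Coprime m n := Nat.Coprime.pow_left _
    ((Nat.Prime.coprime_iff_not_dvd hp).mpr (fun hdvd => by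
      have := Nat.le_of_dvd hn hdvd; omega))
  have hinj : Function.Injective (fun x : G => x ^ m) :=
    SchurRingTorsionProof.pow_coprime_injective hn hT (by omega) hcopmn
  have hsub : D ⊆ D.image (· ^ m) := fun x hx => hDim x hx
  have hcard : (D.image (· ^ m)).card ≤ D.card := Finset.card_image_le
  have hEq : D = D.image (· ^ m) := Finset.eq_of_subset_of_card_le hsub hcard
  have hiter : ∀ j : ℕ, b ^ m ^ j ∈ D := by
    intro j
    induction j with
    | zero => simpa using hbD
    | succ j ih =>
        have hgen : ∀ (x : G) (c i : ℕ), x ^ c ^ (i + 1) = (x ^ c ^ i) ^ c := by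
          intro x c i
          rw [← pow_mul, ← pow_succ]
        rw [hgen b m j, hEq]
        exact Finset.mem_image.mpr ⟨_, ih, rfl⟩
  have hmap : ∀ j ∈ Finset.range (D.card + 1), b ^ m ^ j ∈ D := fun j _ => hiter j
  have hlt : D.card < (Finset.range (D.card + 1)).card := by
    rw [Finset.card_range]; omega
  obtain ⟨i, hi, j, hj, hij, hbij⟩ :=
    Finset.exists_ne_map_eq_of_card_lt_of_maps_to hlt hmap
  have key : ∀ i j : ℕ, i < j → b ^ m ^ i = b ^ m ^ j → b ∈ ↑(CommGroup.torsion G) := by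
    intro i j hlt' hbij
    have hmi_lt : m ^ i < m ^ j := Nat.pow_lt_pow_right (by omega) hlt'
    have hpow : b ^ (m ^ j - m ^ i) = 1 := by
      have h1 : b ^ (m ^ j - m ^ i) * b ^ m ^ i = b ^ m ^ i := by
        rw [← pow_add, Nat.sub_add_cancel (le_of_lt hmi_lt), hbij]
      exact mul_right_cancel (h1.trans (one_mul _).symm)
    exact isOfFinOrder_iff_pow_eq_one.mpr ⟨m ^ j - m ^ i, by omega, hpow⟩
  rcases Nat.lt_or_ge i j with hlt' | hge
  · exact key i j hlt' hbij
  · have hlt'' : j < i := by omega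
    exact key j i hlt'' hbij.symm
end
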